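/- Let (χ, dist, μ) be a metric space with a Borel probability measure. For k = 0, …, K−1 let logit^{(k)}: ℝ^{d_h} × ℝ^{d_h} × ℝ^{d_p} → ℝ be Lipschitz with constant at most L_logit (with respect to the sum of the Euclidean norms of the arguments), let v^{(k)}: ℝ^{d_h} → ℝ^{d_h} be Lipschitz with constant at most L_v with v^{(k)}(0) = 0, and let p: χ × χ → ℝ^{d_p} be bounded measurable and Lipschitz with constant L_p in each argument. Let f: χ → ℝ^{d_h} be bounded and Lipschitz with constant L_f, and define hidden states recursively: h^{(0)} = f and h^{(k+1)}(x) = ∫_χ Att^{(k)}(x,y)·v^{(k)}(h^{(k)}(y)) dμ(y), where Att^{(k)}(x,y) = exp(Logit^{(k)}(x,y)) / ∫_χ exp(Logit^{(k)}(x,z)) dμ(z) and Logit^{(k)}(x,y) = logit^{(k)}(h^{(k)}(x), h^{(k)}(y), p(x,y)). Assume L_v ≥ 1, 4·L_logit·‖f‖_∞ ≥ 1, and that r > 0 satisfies (4^k·L_logit^k·L_v^{k(k+1)/2}·‖f‖_∞^k·(L_f + k·L_p) + L_p)·r ≤ 1/(2·L_logit) for every k = 0, …, K−1. Then for every k = 0,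 …, K−1: LocLip_r(h^{(k)}) ≤ 4^k·L_logit^k·L_v^{k(k+1)/2}·‖f‖_∞^k·(L_f + k·L_p) and ‖h^{(k)}‖_∞ ≤ L_v^k·‖f‖_∞. -/

import Mathlib

open MeasureTheory

private lemma exp_le_one_add_two_mul' {t : ℝ} (h0 : 0 ≤ t) (h1 : t ≤ 1) :
    Real.exp t ≤ 1 + 2 * t := by
  have hc := convexOn_exp.2 (Set.mem_univ (0:ℝ)) (Set.mem_univ (1:ℝ))
    (by linarith : (0:ℝ) ≤ 1 - t) h0 (by ring)
  simp only [smul_eq_mul, mul_zero, mul_one, zero_add, Real.exp_zero] at hc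
  have he : Real.exp 1 ≤ 3 := by
    have := Real.exp_one_lt_d9; linarith
  nlinarith [Real.exp_pos (1:ℝ), mul_nonneg h0 (by linarith : (0:ℝ) ≤ 3 - Real.exp 1)]

private lemma div_le_sq_mul_div' {a a' z z' t : ℝ} (ha : 0 ≤ a) (ha' : 0 ≤ a')
    (hz : 0 < z) (hz' : 0 < z') (ht : 0 ≤ t) (h1 : a ≤ t * a') (h2 : z' ≤ t * z) :
    a / z ≤ t ^ 2 * (a' / z') := by
  rw [← mul_div_assoc, div_le_div_iff₀ hz hz']
  nlinarith [mul_le_mul h1 h2 hz'.le (mul_nonneg ht ha')]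

set_option maxHeartbeats 2000000 in
/-- Local Lipschitzness propagates through the layers of a continuous Transformer:
if `h⁽⁰⁾ = f` and `h⁽ᵏ⁺¹⁾(x) = ∫ Att⁽ᵏ⁾(x,y) • v⁽ᵏ⁾(h⁽ᵏ⁾(y)) dμ(y)` with Lipschitz logit,
value and positional-encoding functions, then for every `k < K`,
`LocLip_r(h⁽ᵏ⁾) ≤ 4ᵏ·L_logitᵏ·L_v^{k(k+1)/2}·‖f‖_∞ᵏ·(L_f + k·L_p)` and
`‖h⁽ᵏ⁾‖_∞ ≤ L_vᵏ·‖f‖_∞`. -/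
theorem stmt4
    {χ : Type*} [MetricSpace χ] [MeasurableSpace χ]
    (μ : Measure χ) [IsProbabilityMeasure μ]
    (dh dp K : ℕ)
    (logit : ℕ → EuclideanSpace ℝ (Fin dh) → EuclideanSpace ℝ (Fin dh) →
      EuclideanSpace ℝ (Fin dp) → ℝ)
    (v : ℕ → EuclideanSpace ℝ (Fin dh) → EuclideanSpace ℝ (Fin dh))
    (p : χ → χ → EuclideanSpace ℝ (Fin dp))
    (f : χ → EuclideanSpace ℝ (Fin dh))
    (Llogit Lv Lp Lf r : ℝ)
    (hLlogit : 0 ≤ Llogit) (hLp : 0 ≤ Lp) (hLf : 0 ≤ Lf) (hr : 0 < r)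
    (hlogit : ∀ k < K, ∀ a b c a' b' c', |logit k a b c - logit k a' b' c'| ≤
      Llogit * (‖a - a'‖ + ‖b - b'‖ + ‖c - c'‖))
    (hv : ∀ k < K, ∀ a b, ‖v k a - v k b‖ ≤ Lv * ‖a - b‖)
    (hv0 : ∀ k < K, v k 0 = 0)
    (hpmeas : Measurable fun q : χ × χ => p q.1 q.2)
    (hpbdd : ∃ M : ℝ, ∀ x y, ‖p x y‖ ≤ M)
    (hplip1 : ∀ x x' y, ‖p x y - p x' y‖ ≤ Lp * dist x x')
    (hplip2 : ∀ x y y', ‖p x y - p x y'‖ ≤ Lp * dist y y')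
    (hfmeas : Measurable f)
    (hfbdd : ∃ M : ℝ, ∀ x, ‖f x‖ ≤ M)
    (hflip : ∀ x y, ‖f x - f y‖ ≤ Lf * dist x y)
    (hseq : ℕ → χ → EuclideanSpace ℝ (Fin dh))
    (h0 : hseq 0 = f)
    (hrec : ∀ k < K, ∀ x,
      hseq (k + 1) x = ∫ y, (Real.exp (logit k (hseq k x) (hseq k y) (p x y)) /
        ∫ z, Real.exp (logit k (hseq k x) (hseq k z) (p x z)) ∂μ) • v k (hseq k y) ∂μ)
    (hLv : 1 ≤ Lv)
    (hLf4 : 1 ≤ 4 * Llogit * ⨆ x, ‖f x‖)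
    (hrsmall : ∀ k < K,
      ((4 : ℝ) ^ k * Llogit ^ k * Lv ^ (k * (k + 1) / 2) * (⨆ x, ‖f x‖) ^ k *
          (Lf + (k : ℝ) * Lp) + Lp) * r ≤ 1 / (2 * Llogit)) :
    ∀ k < K,
      (∀ x y : χ, dist x y ≤ r →
        ‖hseq k x - hseq k y‖ ≤
          (4 : ℝ) ^ k * Llogit ^ k * Lv ^ (k * (k + 1) / 2) * (⨆ x, ‖f x‖) ^ k *
            (Lf + (k : ℝ) * Lp) * dist x y) ∧
      (∀ x : χ, ‖hseq k x‖ ≤ Lv ^ k * ⨆ x, ‖f x‖) := by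
  obtain ⟨Mf, hMf⟩ := hfbdd
  obtain ⟨Mp0, hMp0⟩ := hpbdd
  set Mp := max Mp0 0 with hMpdef
  have hMp : ∀ x y, ‖p x y‖ ≤ Mp := fun x y => (hMp0 x y).trans (le_max_left _ _)
  set F := ⨆ x, ‖f x‖ with hFdef
  have hbdd : BddAbove (Set.range fun x => ‖f x‖) := ⟨Mf, by rintro _ ⟨x, rfl⟩; exact hMf x⟩
  have hF : ∀ x, ‖f x‖ ≤ F := fun x => le_ciSup hbdd x
  have hLpos : 0 < Llogit := by
    rcases lt_or_eq_of_le hLlogit with h | h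
    · exact h
    · exfalso; rw [← h] at hLf4; simp at hLf4; linarith
  have hFpos : 0 < F := by nlinarith
  have hLv0 : (0:ℝ) ≤ Lv := by linarith
  have hvb : ∀ k, k < K → ∀ a, ‖v k a‖ ≤ Lv * ‖a‖ := by
    intro k hk a
    have h1 := hv k hk a 0
    rw [hv0 k hk, sub_zero, sub_zero] at h1
    exact h1
  have hvcont : ∀ k, k < K → Continuous (v k) := by
    intro k hk
    refine (LipschitzWith.of_dist_le_mul (K := Real.toNNReal Lv) ?_).continuous
    intro a b
    rw [Real.coe_toNNReal _ hLv0, dist_eq_norm, dist_eq_norm]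
    exact hv k hk a b
  suffices H : ∀ k, k < K →
      ((∀ x y : χ, dist x y ≤ r → ‖hseq k x - hseq k y‖ ≤
        (4 : ℝ) ^ k * Llogit ^ k * Lv ^ (k * (k + 1) / 2) * F ^ k *
          (Lf + (k : ℝ) * Lp) * dist x y) ∧
       (∀ x : χ, ‖hseq k x‖ ≤ Lv ^ k * F) ∧ Measurable (hseq k)) by
    exact fun k hk => ⟨(H k hk).1, (H k hk).2.1⟩
  intro k
  induction k with
  | zero =>
    intro _
    refine ⟨?_, ?_, by rw [h0]; exact hfmeas⟩
    · intro x y _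
      rw [h0]
      simpa using hflip x y
    · intro x
      rw [h0]
      simpa using hF x
  | succ k ih =>
    intro hk1
    have hk : k < K := Nat.lt_of_succ_lt hk1
    obtain ⟨iLip, iBdd, iMeas⟩ := ih hk
    set Ck : ℝ := (4:ℝ)^k * Llogit^k * Lv^(k*(k+1)/2) * F^k * (Lf + (k:ℝ)*Lp) with hCk
    have hCk0 : 0 ≤ Ck := by
      have h1 : (0:ℝ) ≤ Lf + (k:ℝ)*Lp := by
        have := mul_nonneg (Nat.cast_nonneg (α := ℝ) k) hLp; linarith
      have h2 : (0:ℝ) ≤ (4:ℝ)^k * Llogit^k * Lv^(k*(k+1)/2) * F^k :=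
        mul_nonneg (mul_nonneg (mul_nonneg (by positivity) (pow_nonneg hLlogit k))
          (pow_nonneg hLv0 _)) (pow_nonneg hFpos.le k)
      exact mul_nonneg h2 h1
    set Lg : χ → χ → ℝ := fun x y => logit k (hseq k x) (hseq k y) (p x y) with hLgdef
    set Z : χ → ℝ := fun x => ∫ z, Real.exp (Lg x z) ∂μ with hZdef
    have hrec' : ∀ x, hseq (k+1) x = ∫ y, (Real.exp (Lg x y) / Z x) • v k (hseq k y) ∂μ :=
      fun x => hrec k hk x
    set B : ℝ := |logit k 0 0 0| + Llogit * (2 * (Lv^k * F) + Mp) with hBdef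
    have hLgB : ∀ x y, |Lg x y| ≤ B := by
      intro x y
      have h1 := hlogit k hk (hseq k x) (hseq k y) (p x y) 0 0 0
      simp only [sub_zero] at h1
      have h3 := abs_sub_abs_le_abs_sub (Lg x y) (logit k 0 0 0)
      have h4 : ‖hseq k x‖ + ‖hseq k y‖ + ‖p x y‖ ≤ 2*(Lv^k*F) + Mp := by
        have := iBdd x; have := iBdd y; have := hMp x y; linarith
      have h5 := mul_le_mul_of_nonneg_left h4 hLlogit
      have h6 : |Lg x y - logit k 0 0 0| ≤
          Llogit * (‖hseq k x‖ + ‖hseq k y‖ + ‖p x y‖) := h1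
      rw [hBdef]; linarith
    have hEpos : ∀ x y, 0 < Real.exp (Lg x y) := fun x y => Real.exp_pos _
    have hEle : ∀ x y, Real.exp (Lg x y) ≤ Real.exp B := fun x y =>
      Real.exp_le_exp.mpr ((abs_le.mp (hLgB x y)).2)
    have hEge : ∀ x y, Real.exp (-B) ≤ Real.exp (Lg x y) := fun x y =>
      Real.exp_le_exp.mpr ((abs_le.mp (hLgB x y)).1)
    -- measurability
    have hlogitcont : Continuous (fun q : EuclideanSpace ℝ (Fin dh) ×
        EuclideanSpace ℝ (Fin dh) × EuclideanSpace ℝ (Fin dp) =>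
        logit k q.1 q.2.1 q.2.2) := by
      refine (LipschitzWith.of_dist_le_mul (K := Real.toNNReal (3*Llogit)) ?_).continuous
      intro q q'
      rw [Real.coe_toNNReal _ (by linarith : (0:ℝ) ≤ 3*Llogit), Real.dist_eq]
      have h1 := hlogit k hk q.1 q.2.1 q.2.2 q'.1 q'.2.1 q'.2.2
      have h2 : ‖q.1 - q'.1‖ ≤ dist q q' := by
        rw [← dist_eq_norm, Prod.dist_eq]; exact le_max_left _ _
      have h5 : dist q.2 q'.2 ≤ dist q q' := by
        rw [Prod.dist_eq]; exact le_max_right _ _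
      have h3 : ‖q.2.1 - q'.2.1‖ ≤ dist q q' := by
        rw [← dist_eq_norm]
        exact le_trans (by rw [Prod.dist_eq]; exact le_max_left _ _) h5
      have h4 : ‖q.2.2 - q'.2.2‖ ≤ dist q q' := by
        rw [← dist_eq_norm]
        exact le_trans (by rw [Prod.dist_eq]; exact le_max_right _ _) h5
      nlinarith [h1, mul_nonneg hLlogit (sub_nonneg.mpr h2),
        mul_nonneg hLlogit (sub_nonneg.mpr h3), mul_nonneg hLlogit (sub_nonneg.mpr h4)]
    have hmeasLg : Measurable (fun q : χ × χ => Lg q.1 q.2) :=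
      hlogitcont.measurable.comp
        ((iMeas.comp measurable_fst).prodMk ((iMeas.comp measurable_snd).prodMk hpmeas))
    have hmeasE : Measurable (fun q : χ × χ => Real.exp (Lg q.1 q.2)) :=
      Real.measurable_exp.comp hmeasLg
    have hmeasEx : ∀ x, Measurable (fun y => Real.exp (Lg x y)) := by
      intro x
      have heq : (fun y => Real.exp (Lg x y)) =
          (fun q : χ × χ => Real.exp (Lg q.1 q.2)) ∘ (fun y => (x, y)) := rfl
      rw [heq]
      exact hmeasE.comp measurable_prodMk_left
    have hEint : ∀ x, Integrable (fun y => Real.exp (Lg x y)) μ := by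
      intro x
      refine (integrable_const (Real.exp B)).mono' (hmeasEx x).aestronglyMeasurable ?_
      filter_upwards with y
      rw [Real.norm_eq_abs, abs_of_pos (hEpos x y)]
      exact hEle x y
    have hZge : ∀ x, Real.exp (-B) ≤ Z x := by
      intro x
      have h1 : ∫ _ : χ, Real.exp (-B) ∂μ ≤ ∫ y, Real.exp (Lg x y) ∂μ :=
        integral_mono (integrable_const _) (hEint x) (fun y => hEge x y)
      simpa using h1
    have hZpos : ∀ x, 0 < Z x := fun x => lt_of_lt_of_le (Real.exp_pos _) (hZge x)
    have hAint : ∀ x, ∫ y, Real.exp (Lg x y) / Z x ∂μ = 1 := by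
      intro x
      rw [integral_div]
      exact div_self (hZpos x).ne'
    have hZmeas : Measurable Z :=
      (hmeasE.stronglyMeasurable.integral_prod_right').measurable
    have hvmeas : Measurable (fun y => v k (hseq k y)) := (hvcont k hk).measurable.comp iMeas
    have hS : ∀ y, ‖v k (hseq k y)‖ ≤ Lv^(k+1) * F := by
      intro y
      calc ‖v k (hseq k y)‖ ≤ Lv * ‖hseq k y‖ := hvb k hk _
      _ ≤ Lv * (Lv^k * F) := mul_le_mul_of_nonneg_left (iBdd y) hLv0
      _ = Lv^(k+1) * F := by ring
    have hS0 : (0:ℝ) ≤ Lv^(k+1) * F := mul_nonneg (pow_nonneg hLv0 _) hFpos.le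
    have hint : ∀ x, Integrable (fun y => (Real.exp (Lg x y) / Z x) • v k (hseq k y)) μ := by
      intro x
      refine (integrable_const (Real.exp B / Real.exp (-B) * (Lv^(k+1) * F))).mono'
        (((hmeasEx x).div_const _).smul hvmeas).aestronglyMeasurable ?_
      filter_upwards with y
      rw [norm_smul, Real.norm_eq_abs, abs_of_pos (div_pos (hEpos x y) (hZpos x))]
      have h1 : Real.exp (Lg x y) / Z x ≤ Real.exp B / Real.exp (-B) :=
        div_le_div₀ (Real.exp_pos B).le (hEle x y) (Real.exp_pos _) (hZge x)
      exact mul_le_mul h1 (hS y) (norm_nonneg _)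
        (div_nonneg (Real.exp_pos B).le (Real.exp_pos _).le)
    have hmeas1 : Measurable (hseq (k+1)) := by
      have heq : hseq (k+1) = fun x => ∫ y, (Real.exp (Lg x y) / Z x) • v k (hseq k y) ∂μ :=
        funext hrec'
      rw [heq]
      have hjoint : StronglyMeasurable (fun q : χ × χ =>
          (Real.exp (Lg q.1 q.2) / Z q.1) • v k (hseq k q.2)) :=
        ((hmeasE.div (hZmeas.comp measurable_fst)).smul
          (hvmeas.comp measurable_snd)).stronglyMeasurable
      exact hjoint.integral_prod_right'.measurable
    -- boundedness
    have hBdd1 : ∀ x, ‖hseq (k+1) x‖ ≤ Lv^(k+1) * F := by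
      intro x
      rw [hrec' x]
      calc ‖∫ y, (Real.exp (Lg x y) / Z x) • v k (hseq k y) ∂μ‖
          ≤ ∫ y, Real.exp (Lg x y) / Z x * (Lv^(k+1) * F) ∂μ := by
            refine norm_integral_le_of_norm_le (((hEint x).div_const _).mul_const _) ?_
            filter_upwards with y
            rw [norm_smul, Real.norm_eq_abs, abs_of_pos (div_pos (hEpos x y) (hZpos x))]
            exact mul_le_mul_of_nonneg_left (hS y)
              (div_pos (hEpos x y) (hZpos x)).le
      _ = (∫ y, Real.exp (Lg x y) / Z x ∂μ) * (Lv^(k+1) * F) := integral_mul_const _ _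
      _ = Lv^(k+1) * F := by rw [hAint x, one_mul]
    -- Lipschitz
    have hLip1 : ∀ x x' : χ, dist x x' ≤ r → ‖hseq (k+1) x - hseq (k+1) x'‖ ≤
        (4:ℝ)^(k+1) * Llogit^(k+1) * Lv^((k+1)*((k+1)+1)/2) * F^(k+1) *
          (Lf + ((k+1 : ℕ):ℝ)*Lp) * dist x x' := by
      intro x x' hd
      set d := dist x x' with hddef
      have hd0 : (0:ℝ) ≤ d := dist_nonneg
      set δ := Llogit * ((Ck + Lp) * d) with hδdef
      have hδ0 : 0 ≤ δ := mul_nonneg hLlogit (mul_nonneg (by linarith) hd0)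
      have hδle : 2 * δ ≤ 1 := by
        have h1 := hrsmall k hk
        rw [← hCk] at h1
        have h2 : (Ck + Lp) * d ≤ (Ck + Lp) * r :=
          mul_le_mul_of_nonneg_left hd (by linarith)
        have h3 : Llogit * ((Ck+Lp)*d) ≤ Llogit * (1/(2*Llogit)) :=
          mul_le_mul_of_nonneg_left (h2.trans h1) hLlogit
        have h4 : Llogit * (1/(2*Llogit)) = 1/2 := by field_simp
        rw [hδdef]; linarith
      have hLgd : ∀ y, |Lg x y - Lg x' y| ≤ δ := by
        intro y
        have h1 := hlogit k hk (hseq k x) (hseq k y) (p x y) (hseq k x') (hseq k y) (p x' y)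
        have h2 : ‖hseq k x - hseq k x'‖ ≤ Ck * d := iLip x x' hd
        have h3 : ‖p x y - p x' y‖ ≤ Lp * d := hplip1 x x' y
        have h4 : ‖hseq k y - hseq k y‖ = (0:ℝ) := by simp
        have h5 : Llogit * (‖hseq k x - hseq k x'‖ + ‖hseq k y - hseq k y‖ +
            ‖p x y - p x' y‖) ≤ Llogit * (Ck*d + 0 + Lp*d) :=
          mul_le_mul_of_nonneg_left (by rw [h4]; linarith) hLlogit
        have h6 : Llogit * (Ck*d + 0 + Lp*d) = δ := by rw [hδdef]; ring
        calc |Lg x y - Lg x' y| ≤ _ := h1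
        _ ≤ _ := h5
        _ = δ := h6
      set t := Real.exp δ with htdef
      have ht1 : 1 ≤ t := by rw [htdef]; exact Real.one_le_exp hδ0
      have hExx' : ∀ y, Real.exp (Lg x y) ≤ t * Real.exp (Lg x' y) := by
        intro y
        rw [htdef, ← Real.exp_add]
        exact Real.exp_le_exp.mpr (by linarith [(abs_le.mp (hLgd y)).2])
      have hEx'x : ∀ y, Real.exp (Lg x' y) ≤ t * Real.exp (Lg x y) := by
        intro y
        rw [htdef, ← Real.exp_add]
        exact Real.exp_le_exp.mpr (by linarith [(abs_le.mp (hLgd y)).1])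
      have hZxx' : Z x ≤ t * Z x' := by
        have h1 : ∫ y, Real.exp (Lg x y) ∂μ ≤ ∫ y, t * Real.exp (Lg x' y) ∂μ :=
          integral_mono (hEint x) ((hEint x').const_mul t) hExx'
        rwa [integral_const_mul] at h1
      have hZx'x : Z x' ≤ t * Z x := by
        have h1 : ∫ y, Real.exp (Lg x' y) ∂μ ≤ ∫ y, t * Real.exp (Lg x y) ∂μ :=
          integral_mono (hEint x') ((hEint x).const_mul t) hEx'x
        rwa [integral_const_mul] at h1
      have hApt : ∀ y, |Real.exp (Lg x y) / Z x - Real.exp (Lg x' y) / Z x'| ≤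
          (t^2 - 1) * (Real.exp (Lg x' y) / Z x') := by
        intro y
        have hA := div_le_sq_mul_div' (hEpos x y).le (hEpos x' y).le (hZpos x) (hZpos x')
          (by linarith) (hExx' y) (hZx'x)
        have hA' := div_le_sq_mul_div' (hEpos x' y).le (hEpos x y).le (hZpos x') (hZpos x)
          (by linarith) (hEx'x y) (hZxx')
        have hApos : 0 < Real.exp (Lg x y) / Z x := div_pos (hEpos x y) (hZpos x)
        have hA'pos : 0 < Real.exp (Lg x' y) / Z x' := div_pos (hEpos x' y) (hZpos x')
        rw [abs_le]
        constructor
        · nlinarith [mul_nonneg hA'pos.le (sq_nonneg (t^2 - 1)),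
            mul_pos (lt_of_lt_of_le one_pos ht1) (lt_of_lt_of_le one_pos ht1)]
        · linarith
      have hdiffeq : hseq (k+1) x - hseq (k+1) x' =
          ∫ y, (Real.exp (Lg x y) / Z x - Real.exp (Lg x' y) / Z x') • v k (hseq k y) ∂μ := by
        rw [hrec' x, hrec' x', ← integral_sub (hint x) (hint x')]
        congr 1
        funext y
        rw [sub_smul]
      have ht2 : (0:ℝ) ≤ t^2 - 1 := by nlinarith
      have hnorm : ‖hseq (k+1) x - hseq (k+1) x'‖ ≤ (t^2 - 1) * (Lv^(k+1) * F) := by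
        rw [hdiffeq]
        calc ‖∫ y, (Real.exp (Lg x y) / Z x - Real.exp (Lg x' y) / Z x') •
              v k (hseq k y) ∂μ‖
            ≤ ∫ y, (t^2 - 1) * (Lv^(k+1) * F) * (Real.exp (Lg x' y) / Z x') ∂μ := by
              refine norm_integral_le_of_norm_le
                (((hEint x').div_const _).const_mul _) ?_
              filter_upwards with y
              rw [norm_smul, Real.norm_eq_abs]
              calc |Real.exp (Lg x y) / Z x - Real.exp (Lg x' y) / Z x'| * ‖v k (hseq k y)‖
                  ≤ (t^2 - 1) * (Real.exp (Lg x' y) / Z x') * (Lv^(k+1) * F) :=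
                    mul_le_mul (hApt y) (hS y) (norm_nonneg _)
                      (mul_nonneg ht2 (div_pos (hEpos x' y) (hZpos x')).le)
              _ = (t^2 - 1) * (Lv^(k+1) * F) * (Real.exp (Lg x' y) / Z x') := by ring
        _ = (t^2 - 1) * (Lv^(k+1) * F) * ∫ y, Real.exp (Lg x' y) / Z x' ∂μ :=
            integral_const_mul _ _
        _ = (t^2 - 1) * (Lv^(k+1) * F) := by rw [hAint x', mul_one]
      have hfin1 : t^2 - 1 ≤ 4 * δ := by
        have h2 : t^2 = Real.exp (δ + δ) := by rw [htdef, sq, ← Real.exp_add]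
        have h3 : Real.exp (δ + δ) ≤ 1 + 2 * (δ + δ) :=
          exp_le_one_add_two_mul' (by linarith) (by linarith)
        rw [h2]; linarith
      have hfinal : ‖hseq (k+1) x - hseq (k+1) x'‖ ≤ 4 * δ * (Lv^(k+1) * F) :=
        hnorm.trans (mul_le_mul_of_nonneg_right hfin1 hS0)
      refine hfinal.trans ?_
      have hX1 : (1:ℝ) ≤ (4:ℝ)^k * Llogit^k * F^k := by
        have h := one_le_pow₀ (n := k) (by linarith : (1:ℝ) ≤ 4*Llogit*F)
        calc (1:ℝ) ≤ (4*Llogit*F)^k := h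
        _ = 4^k*Llogit^k*F^k := by rw [mul_pow, mul_pow]
      have hY1 : (1:ℝ) ≤ Lv^(k*(k+1)/2) := one_le_pow₀ hLv
      have hQ1 : (1:ℝ) ≤ (4:ℝ)^k * Llogit^k * Lv^(k*(k+1)/2) * F^k := by
        nlinarith [mul_le_mul hX1 hY1 zero_le_one (le_trans zero_le_one hX1)]
      have hP0 : (0:ℝ) ≤ 4*Llogit*Lv^(k+1)*F :=
        mul_nonneg (mul_nonneg (mul_nonneg (by norm_num) hLlogit) (pow_nonneg hLv0 _))
          hFpos.le
      rw [hδdef, hCk, show (k+1)*((k+1)+1)/2 = k*(k+1)/2 + (k+1) from by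
        rw [show (k+1)*((k+1)+1) = k*(k+1) + 2*(k+1) from by ring,
          Nat.add_mul_div_left _ _ (by norm_num : 0 < 2)]]
      rw [show Lv ^ (k*(k+1)/2 + (k+1)) = Lv^(k*(k+1)/2) * Lv^(k+1) from pow_add _ _ _]
      push_cast
      have h5 : Lp ≤ ((4:ℝ)^k*Llogit^k*Lv^(k*(k+1)/2)*F^k)*Lp :=
        le_mul_of_one_le_left hLp hQ1
      calc 4 * (Llogit * (((4:ℝ)^k * Llogit^k * Lv^(k*(k+1)/2) * F^k *
            (Lf + (k:ℝ) * Lp) + Lp) * d)) * (Lv ^ (k + 1) * F)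
          = (4*Llogit*Lv^(k+1)*F*((4:ℝ)^k*Llogit^k*Lv^(k*(k+1)/2)*F^k*
              (Lf + (k:ℝ)*Lp) + Lp))*d := by ring
        _ ≤ (4*Llogit*Lv^(k+1)*F*((4:ℝ)^k*Llogit^k*Lv^(k*(k+1)/2)*F^k*
              (Lf + (k:ℝ)*Lp) + (4:ℝ)^k*Llogit^k*Lv^(k*(k+1)/2)*F^k*Lp))*d := by
            refine mul_le_mul_of_nonneg_right (mul_le_mul_of_nonneg_left ?_ hP0) hd0
            linarith
        _ = (4:ℝ)^(k+1) * Llogit^(k+1) * (Lv^(k*(k+1)/2) * Lv^(k+1)) * F^(k+1) *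
              (Lf + ((k:ℝ) + 1) * Lp) * d := by ring
    exact ⟨hLip1, hBdd1, hmeas1⟩
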